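/- Let n ≥ 1 and let 0 ≤ j < 2^n. For every 0 ≤ k < 2^n with binary expansion k = ∑_{l=1}^{n} k_l·2^{n−l} (each k_l ∈ {0,1}), one has exp(2πi·j·k/2^n)/√(2^n) = ∏_{l=1}^{n} (1/√2)·exp(2πi·k_l·(j mod 2^l)/2^l). Equivalently, the j-th column of the 2^n-dimensional quantum Fourier transform is the tensor product of the single-qubit states (1/√2)(|0⟩ + exp(2πi·(j mod 2^l)/2^l)|1⟩) for l = 1,…,n, with the l = 1 factor on the most significant qubit of the output. -/

import Mathlib

open scoped BigOperators

/-- For `n ≥ 1`, `0 ≤ j < 2^n` and `0 ≤ k < 2^n` with binary expansion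
`k = ∑_{l=1}^n k_l · 2^{n-l}` (`k_l ∈ {0,1}`), the `(k,j)` entry of the `2^n`-dimensional
quantum Fourier transform factors as a product of single-qubit amplitudes:
`exp(2πi·j·k/2^n)/√(2^n) = ∏_{l=1}^n (1/√2)·exp(2πi·k_l·(j mod 2^l)/2^l)`. -/
theorem qft_entry_factorization
    (n j k : ℕ) (kb : ℕ → ℕ)
    (hn : 1 ≤ n) (hj : j < 2^n) (hk : k < 2^n)
    (hbit : ∀ l, kb l ≤ 1)
    (hsum : k = ∑ l ∈ Finset.Icc 1 n, kb l * 2^(n - l)) :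
    Complex.exp (2 * Real.pi * Complex.I * (j : ℂ) * (k : ℂ) / (2:ℂ)^n)
        / (Real.sqrt (2^n) : ℂ) =
      ∏ l ∈ Finset.Icc 1 n,
        (1 / (Real.sqrt 2 : ℂ)) *
          Complex.exp (2 * Real.pi * Complex.I * (kb l : ℂ) * ((j % 2^l : ℕ) : ℂ)
            / (2:ℂ)^l) := by
  have hcard : (Finset.Icc 1 n).card = n := by simp
  rw [Finset.prod_mul_distrib]
  have hsq : Real.sqrt ((2:ℝ)^n) = Real.sqrt 2 ^ n := by
    rw [show ((2:ℝ)^n) = (Real.sqrt 2 ^ n)^2 by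
        rw [← pow_mul, mul_comm, pow_mul, Real.sq_sqrt (by norm_num : (0:ℝ) ≤ 2)],
      Real.sqrt_sq (by positivity)]
  have h1 : ∏ _l ∈ Finset.Icc 1 n, (1 / (Real.sqrt 2 : ℂ)) = 1 / (Real.sqrt (2^n) : ℂ) := by
    rw [Finset.prod_const, hcard, hsq]
    push_cast
    rw [one_div, one_div, inv_pow]
  rw [h1]
  have h2 : Complex.exp (2 * Real.pi * Complex.I * (j : ℂ) * (k : ℂ) / (2:ℂ)^n) =
      ∏ l ∈ Finset.Icc 1 n,
        Complex.exp (2 * Real.pi * Complex.I * (kb l : ℂ) * ((j % 2^l : ℕ) : ℂ) / (2:ℂ)^l) := by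
    have step1 : Complex.exp (2 * Real.pi * Complex.I * (j : ℂ) * (k : ℂ) / (2:ℂ)^n) =
        ∏ l ∈ Finset.Icc 1 n,
          Complex.exp (2 * Real.pi * Complex.I * (j : ℂ) * (kb l : ℂ) / (2:ℂ)^l) := by
      rw [← Complex.exp_sum]
      congr 1
      subst hsum
      push_cast
      rw [Finset.mul_sum, Finset.sum_div]
      apply Finset.sum_congr rfl
      intro l hl
      obtain ⟨hl1, hln⟩ := Finset.mem_Icc.mp hl
      have hpow : (2:ℂ)^(n - l) * (2:ℂ)^l = (2:ℂ)^n := by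
        rw [← pow_add, Nat.sub_add_cancel hln]
      have h2l : ((2:ℂ)^l) ≠ 0 := by
        exact pow_ne_zero _ two_ne_zero
      have h2n : ((2:ℂ)^n) ≠ 0 := by
        exact pow_ne_zero _ two_ne_zero
      field_simp
      rw [← hpow]
      ring
    rw [step1]
    apply Finset.prod_congr rfl
    intro l hl
    have h2l : ((2:ℂ)^l) ≠ 0 := pow_ne_zero _ two_ne_zero
    have hdm : (j : ℂ) = (2:ℂ)^l * ((j / 2^l : ℕ) : ℂ) + ((j % 2^l : ℕ) : ℂ) := by
      have h := Nat.div_add_mod j (2^l)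
      have : ((2^l * (j / 2^l) + j % 2^l : ℕ) : ℂ) = (j : ℂ) := by rw [h]
      push_cast at this
      linear_combination -this
    have key : 2 * Real.pi * Complex.I * (j : ℂ) * (kb l : ℂ) / (2:ℂ)^l =
        ((kb l * (j / 2^l) : ℕ) : ℂ) * (2 * Real.pi * Complex.I) +
          2 * Real.pi * Complex.I * (kb l : ℂ) * ((j % 2^l : ℕ) : ℂ) / (2:ℂ)^l := by
      rw [hdm]
      push_cast
      field_simp
    rw [key, Complex.exp_add, Complex.exp_nat_mul_two_pi_mul_I, one_mul]
  rw [h2]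
  ring
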